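/- Suppose θ < κ are infinite regular cardinals and ⊟ⁱⁿᵈ(κ, θ) holds (the weakening of indexed square described in the context). Then there exists a coloring c : [κ]² → θ that witnesses U(κ,2,θ,2), is subadditive, and is closed on points of cofinality ≥ θ. In particular, κ is not weakly compact. -/

import Mathlib

open Set Cardinal

/-- `ordAcc A` is the set of accumulation points of `A`. -/
def ordAcc (A : Set Ordinal.{0}) : Set Ordinal.{0} :=
  {α | 0 < α ∧ sSup (A ∩ Set.Iio α) = α}

/-- `C` is a club (closed unbounded set) in `β`. -/
def IsClubIn (C : Set Ordinal.{0}) (β : Ordinal.{0}) : Prop :=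
  C ⊆ Set.Iio β ∧ (∀ α < β, α ∈ ordAcc C → α ∈ C) ∧ ∀ α < β, ∃ ξ ∈ C, α ≤ ξ

/-- The principle `⊟ⁱⁿᵈ(κ,θ)`, witnessed by the matrix
`⟨C α i | α ∈ acc(κ), iF α ≤ i < θ⟩`. -/
def IndSqE (κ θ : Cardinal.{0})
    (C : Ordinal.{0} → Ordinal.{0} → Set Ordinal.{0}) (iF : Ordinal.{0} → Ordinal.{0}) :
    Prop :=
  -- (1) increasing sequences of clubs, catching all accumulation points
  (∀ α, α < κ.ord → Order.IsSuccLimit α →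
      iF α < θ.ord ∧
      (∀ i j, iF α ≤ i → i ≤ j → j < θ.ord → C α i ⊆ C α j) ∧
      (∀ i, iF α ≤ i → i < θ.ord → IsClubIn (C α i) α) ∧
      (∀ β, β < α → (Order.IsSuccLimit β ↔ ∃ i, iF α ≤ i ∧ i < θ.ord ∧ β ∈ ordAcc (C α i)))) ∧
  -- (2) full coherence at accumulation points of cofinality ≥ θ
  (∀ α, α < κ.ord → Order.IsSuccLimit α → ∀ i, iF α ≤ i → i < θ.ord →
      ∀ β ∈ ordAcc (C α i), θ ≤ β.cof → iF β ≤ i ∧ C β i = C α i ∩ Set.Iio β) ∧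
  -- (3) eventual coherence everywhere
  (∀ β α, β < α → α < κ.ord → Order.IsSuccLimit β → Order.IsSuccLimit α →
      ∃ j, iF β ≤ j ∧ iF α ≤ j ∧ j < θ.ord ∧
        ∀ i, j ≤ i → i < θ.ord → C β i = C α i ∩ Set.Iio β) ∧
  -- (4) nontriviality
  (∀ D : Set Ordinal.{0}, IsClubIn D κ.ord →
      ∃ α, α < κ.ord ∧ α ∈ ordAcc D ∧ θ ≤ α.cof ∧
        ∀ i, i < θ.ord → D ∩ Set.Iio α ≠ C α i)


noncomputable def uLim (α : Ordinal.{0}) : Ordinal.{0} := sInf {β | α ≤ β ∧ Order.IsSuccLimit β}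

lemma uLim_mem (α : Ordinal.{0}) : α ≤ uLim α ∧ Order.IsSuccLimit (uLim α) :=
  csInf_mem (s := {β | α ≤ β ∧ Order.IsSuccLimit β})
    ⟨α + Ordinal.omega0, le_self_add, Ordinal.isSuccLimit_add _ Ordinal.isSuccLimit_omega0⟩

lemma le_uLim (α : Ordinal.{0}) : α ≤ uLim α := (uLim_mem α).1

lemma uLim_isLimit (α : Ordinal.{0}) : Order.IsSuccLimit (uLim α) := (uLim_mem α).2

lemma uLim_le {α β : Ordinal.{0}} (h : α ≤ β) (hβ : Order.IsSuccLimit β) : uLim α ≤ β :=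
  csInf_le (OrderBot.bddBelow _) ⟨h, hβ⟩

lemma uLim_mono {α β : Ordinal.{0}} (h : α ≤ β) : uLim α ≤ uLim β :=
  uLim_le (h.trans (le_uLim β)) (uLim_isLimit β)

lemma uLim_of_isLimit {α : Ordinal.{0}} (h : Order.IsSuccLimit α) : uLim α = α :=
  le_antisymm (uLim_le le_rfl h) (le_uLim α)

lemma uLim_lt_ord {κ : Cardinal.{0}} (hκ : ℵ₀ < κ) {α : Ordinal.{0}} (h : α < κ.ord) :
    uLim α < κ.ord := by
  refine lt_of_le_of_lt (uLim_le (le_self_add)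
    (Ordinal.isSuccLimit_add _ Ordinal.isSuccLimit_omega0)) ?_
  rw [Cardinal.lt_ord] at h ⊢
  rw [Ordinal.card_add]
  exact Cardinal.add_lt_of_lt hκ.le h (by simpa using hκ)




lemma bddAbove_of_subset_Iio {A : Set Ordinal.{0}} {α : Ordinal.{0}} (h : A ⊆ Set.Iio α) :
    BddAbove A := ⟨α, fun x hx => (h hx).le⟩

lemma sSup_eq_of_unbounded {A : Set Ordinal.{0}} {α : Ordinal.{0}} (hlim : Order.IsSuccLimit α)
    (hsub : A ⊆ Set.Iio α) (hub : ∀ η < α, ∃ ξ ∈ A, η ≤ ξ) : sSup A = α := by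
  obtain ⟨ξ0, hξ0, -⟩ := hub 0 hlim.pos
  have hbdd : BddAbove A := bddAbove_of_subset_Iio hsub
  have h1 : sSup A ≤ α := csSup_le ⟨ξ0, hξ0⟩ fun x hx => (hsub hx).le
  rcases h1.lt_or_eq with h | h
  · exfalso
    obtain ⟨ξ, hξ, hξ2⟩ := hub (sSup A + 1) (hlim.succ_lt h)
    exact absurd (le_csSup hbdd hξ) (by
      intro hle
      exact absurd (lt_of_lt_of_le (Order.lt_succ _) (hξ2.trans hle)) (lt_irrefl _))
  · exact h

lemma mem_ordAcc_of_unbounded {A : Set Ordinal.{0}} {α : Ordinal.{0}} (hlim : Order.IsSuccLimit α)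
    (hub : ∀ η < α, ∃ ξ ∈ A, ξ < α ∧ η ≤ ξ) : α ∈ ordAcc A := by
  refine ⟨hlim.pos, sSup_eq_of_unbounded hlim inter_subset_right ?_⟩
  intro η hη
  obtain ⟨ξ, h1, h2, h3⟩ := hub η hη
  exact ⟨ξ, ⟨h1, h2⟩, h3⟩

lemma exists_lt_of_mem_ordAcc {A : Set Ordinal.{0}} {α η : Ordinal.{0}} (hA : α ∈ ordAcc A)
    (hη : η < α) : ∃ ξ ∈ A, ξ < α ∧ η < ξ := by
  obtain ⟨hpos, hsup⟩ := hA
  have hne : (A ∩ Set.Iio α).Nonempty := by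
    by_contra h
    rw [not_nonempty_iff_eq_empty] at h
    rw [h, csSup_empty] at hsup
    exact hpos.ne (by simpa using hsup)
  obtain ⟨ξ, hξ, h2⟩ := exists_lt_of_lt_csSup hne (by rw [hsup]; exact hη)
  exact ⟨ξ, hξ.1, hξ.2, h2⟩

lemma mem_ordAcc_mono {A B : Set Ordinal.{0}} {α : Ordinal.{0}} (hAB : A ⊆ B)
    (hlim : Order.IsSuccLimit α) (hA : α ∈ ordAcc A) : α ∈ ordAcc B := by
  refine mem_ordAcc_of_unbounded hlim fun η hη => ?_
  obtain ⟨ξ, h1, h2, h3⟩ := exists_lt_of_mem_ordAcc hA hη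
  exact ⟨ξ, hAB h1, h2, h3.le⟩

def Pcoh (θ : Cardinal.{0}) (C : Ordinal.{0} → Ordinal.{0} → Set Ordinal.{0})
    (iF : Ordinal.{0} → Ordinal.{0}) (x y j : Ordinal.{0}) : Prop :=
  iF x ≤ j ∧ iF y ≤ j ∧ j < θ.ord ∧ ∀ i, j ≤ i → i < θ.ord → C x i = C y i ∩ Set.Iio x

noncomputable def eIdx (θ : Cardinal.{0}) (C : Ordinal.{0} → Ordinal.{0} → Set Ordinal.{0})
    (iF : Ordinal.{0} → Ordinal.{0}) (x y : Ordinal.{0}) : Ordinal.{0} :=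
  sInf {j | Pcoh θ C iF x y j}

noncomputable def col (θ : Cardinal.{0}) (C : Ordinal.{0} → Ordinal.{0} → Set Ordinal.{0})
    (iF : Ordinal.{0} → Ordinal.{0}) (α β : Ordinal.{0}) : Ordinal.{0} :=
  if uLim α = uLim β then 0 else eIdx θ C iF (uLim α) (uLim β)

lemma unbounded_of_lift_le {κ : Cardinal.{0}} (hκa : ℵ₀ ≤ κ) {H : Set Ordinal.{0}}
    (hsub : H ⊆ Set.Iio κ.ord) (hcard : Cardinal.lift.{1} κ ≤ #H) :
    ∀ γ < κ.ord, ∃ x ∈ H, γ < x := by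
  intro γ hγ
  by_contra hcon
  push_neg at hcon
  have hsub2 : H ⊆ Set.Iio (γ + 1) := fun x hx =>
    lt_of_le_of_lt (hcon x hx) (by rw [Ordinal.add_one_eq_succ]; exact Order.lt_succ _)
  have h1 : #H ≤ Cardinal.lift.{1} (γ + 1).card := by
    rw [← Ordinal.mk_Iio_ordinal]
    exact Cardinal.mk_le_mk_of_subset hsub2
  have hsucc : γ + 1 < κ.ord := by
    rw [Ordinal.add_one_eq_succ]
    exact (Cardinal.isSuccLimit_ord hκa).succ_lt hγ
  exact absurd (hcard.trans h1) (not_le_of_gt (Cardinal.lift_lt.mpr (Cardinal.lt_ord.mp hsucc)))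

section Main
variable {κ θ : Cardinal.{0}} {C : Ordinal.{0} → Ordinal.{0} → Set Ordinal.{0}}
  {iF : Ordinal.{0} → Ordinal.{0}}

lemma eIdx_spec (hsq : IndSqE κ θ C iF) {x y : Ordinal.{0}} (hxy : x < y) (hy : y < κ.ord)
    (hxl : Order.IsSuccLimit x) (hyl : Order.IsSuccLimit y) : Pcoh θ C iF x y (eIdx θ C iF x y) := by
  have h := hsq.2.2.1 x y hxy hy hxl hyl
  exact csInf_mem (s := {j | Pcoh θ C iF x y j}) (by
    obtain ⟨j, h1, h2, h3, h4⟩ := h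
    exact ⟨j, h1, h2, h3, h4⟩)

lemma eIdx_le {x y j : Ordinal.{0}} (h : Pcoh θ C iF x y j) : eIdx θ C iF x y ≤ j :=
  csInf_le (OrderBot.bddBelow _) h

lemma eIdx_trans1 (hsq : IndSqE κ θ C iF) {x y z : Ordinal.{0}} (hxy : x < y) (hyz : y < z)
    (hz : z < κ.ord) (hx : Order.IsSuccLimit x) (hy : Order.IsSuccLimit y) (hzl : Order.IsSuccLimit z) :
    eIdx θ C iF x z ≤ max (eIdx θ C iF x y) (eIdx θ C iF y z) := by
  obtain ⟨a1, a2, a3, a4⟩ := eIdx_spec hsq hxy (hyz.trans hz) hx hy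
  obtain ⟨b1, b2, b3, b4⟩ := eIdx_spec hsq hyz hz hy hzl
  refine eIdx_le ⟨le_trans a1 (le_max_left _ _), le_trans b2 (le_max_right _ _),
    max_lt a3 b3, fun i hi hi' => ?_⟩
  rw [a4 i (le_trans (le_max_left _ _) hi) hi', b4 i (le_trans (le_max_right _ _) hi) hi',
    inter_assoc]
  congr 1
  exact inter_eq_self_of_subset_right (Iio_subset_Iio hxy.le)

lemma eIdx_trans2 (hsq : IndSqE κ θ C iF) {x y z : Ordinal.{0}} (hxy : x < y) (hyz : y < z)
    (hz : z < κ.ord) (hx : Order.IsSuccLimit x) (hy : Order.IsSuccLimit y) (hzl : Order.IsSuccLimit z) :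
    eIdx θ C iF x y ≤ max (eIdx θ C iF x z) (eIdx θ C iF y z) := by
  obtain ⟨a1, a2, a3, a4⟩ := eIdx_spec hsq (hxy.trans hyz) hz hx hzl
  obtain ⟨b1, b2, b3, b4⟩ := eIdx_spec hsq hyz hz hy hzl
  refine eIdx_le ⟨le_trans a1 (le_max_left _ _), le_trans b1 (le_max_right _ _),
    max_lt a3 b3, fun i hi hi' => ?_⟩
  rw [a4 i (le_trans (le_max_left _ _) hi) hi', b4 i (le_trans (le_max_right _ _) hi) hi',
    inter_assoc]
  congr 1
  exact (inter_eq_self_of_subset_right (Iio_subset_Iio hxy.le)).symm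

lemma col_lt (hsq : IndSqE κ θ C iF) (hθ : θ.IsRegular) (hκa : ℵ₀ < κ)
    {α β : Ordinal.{0}} (hαβ : α < β) (hβ : β < κ.ord) : col θ C iF α β < θ.ord := by
  rw [col]
  split
  · exact hθ.ord_pos
  · next h =>
    exact (eIdx_spec hsq (lt_of_le_of_ne (uLim_mono hαβ.le) h) (uLim_lt_ord hκa hβ)
      (uLim_isLimit _) (uLim_isLimit _)).2.2.1

lemma col_sub1 (hsq : IndSqE κ θ C iF) (hκa : ℵ₀ < κ) {α β γ : Ordinal.{0}}
    (hαβ : α < β) (hβγ : β < γ) (hγ : γ < κ.ord) :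
    col θ C iF α γ ≤ max (col θ C iF α β) (col θ C iF β γ) := by
  have hab : uLim α ≤ uLim β := uLim_mono hαβ.le
  have hbg : uLim β ≤ uLim γ := uLim_mono hβγ.le
  rw [col, col, col]
  split
  · exact zero_le
  · next h1 =>
    split
    · next h2 =>
      split
      · next h3 => exact absurd (h2.trans h3) h1
      · rw [h2]; exact le_max_right _ _
    · next h2 =>
      split
      · next h3 => rw [← h3]; exact le_max_left _ _
      · next h3 =>
        exact (eIdx_trans1 hsq (hab.lt_of_ne h2) (hbg.lt_of_ne h3) (uLim_lt_ord hκa hγ)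
          (uLim_isLimit _) (uLim_isLimit _) (uLim_isLimit _)).trans
          (max_le_max le_rfl le_rfl)

lemma col_sub2 (hsq : IndSqE κ θ C iF) (hκa : ℵ₀ < κ) {α β γ : Ordinal.{0}}
    (hαβ : α < β) (hβγ : β < γ) (hγ : γ < κ.ord) :
    col θ C iF α β ≤ max (col θ C iF α γ) (col θ C iF β γ) := by
  have hab : uLim α ≤ uLim β := uLim_mono hαβ.le
  have hbg : uLim β ≤ uLim γ := uLim_mono hβγ.le
  rw [col, col, col]
  split
  · exact zero_le
  · next h1 =>
    split
    · next h2 =>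
      exact absurd (le_antisymm hab (h2 ▸ hbg)) h1
    · next h2 =>
      split
      · next h3 => rw [h3]; exact le_max_left _ _
      · next h3 =>
        exact (eIdx_trans2 hsq (hab.lt_of_ne h1) (hbg.lt_of_ne h3) (uLim_lt_ord hκa hγ)
          (uLim_isLimit _) (uLim_isLimit _) (uLim_isLimit _)).trans
          (max_le_max le_rfl le_rfl)

lemma col_closed (hsq : IndSqE κ θ C iF) (hθ : θ.IsRegular) (hκa : ℵ₀ < κ)
    {α β j : Ordinal.{0}} (hαβ : α < β) (hβ : β < κ.ord) (hcof : θ ≤ α.cof)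
    (h : ∀ η < α, ∃ ε, η ≤ ε ∧ ε < α ∧ col θ C iF ε β ≤ j) : col θ C iF α β ≤ j := by
  have hαl : Order.IsSuccLimit α := Ordinal.aleph0_le_cof.mp (hθ.aleph0_le.trans hcof)
  by_cases hjθ : j < θ.ord
  swap
  · exact (col_lt hsq hθ hκa hαβ hβ).le.trans (le_of_not_gt hjθ)
  set b := uLim β with hbdef
  have hαb : α < b := lt_of_lt_of_le hαβ (le_uLim β)
  have hbκ : b < κ.ord := uLim_lt_ord hκa hβ
  have hbl : Order.IsSuccLimit (b) := uLim_isLimit β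
  have hcolαβ : col θ C iF α β = eIdx θ C iF α b := by
    rw [col, uLim_of_isLimit hαl, if_neg hαb.ne]
  rw [hcolαβ]
  by_cases hcase : ∀ η < α, ∃ δ, η ≤ δ ∧ δ < α ∧ Order.IsSuccLimit δ ∧ eIdx θ C iF δ b ≤ j
  swap
  · push_neg at hcase
    obtain ⟨η, hη, hηprop⟩ := hcase
    obtain ⟨ε, hε1, hε2, hε3⟩ := h η hη
    have hud : uLim ε ≤ α := uLim_le hε2.le hαl
    rcases hud.lt_or_eq with hud' | hud'
    · exfalso
      have hne : uLim ε ≠ uLim β := (hud'.trans hαb).ne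
      rw [col, if_neg hne] at hε3
      exact (hηprop (uLim ε) (hε1.trans (le_uLim ε)) hud' (uLim_isLimit ε)).not_ge hε3
    · have hne : uLim ε ≠ uLim β := (hud' ▸ hαb.ne : uLim ε ≠ b)
      rw [col, if_neg hne, hud'] at hε3
      exact hε3
  · -- main case
    have hδκ : ∀ δ < α, δ < κ.ord := fun δ hδ => hδ.trans (hαβ.trans hβ)
    -- iF b ≤ j
    obtain ⟨δ0, -, hδ0α, hδ0l, hδ0e⟩ := hcase 0 hαl.pos
    have hiFb : iF b ≤ j :=
      le_trans (eIdx_spec hsq (hδ0α.trans hαb) hbκ hδ0l hbl).2.1 hδ0e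
    -- α is an accumulation point of C b j
    have hacc : α ∈ ordAcc (C b j) := by
      refine mem_ordAcc_of_unbounded hαl fun η hη => ?_
      obtain ⟨δ, hδ1, hδ2, hδ3, hδ4⟩ := hcase (η + 1) (hαl.succ_lt hη)
      have hspec := eIdx_spec hsq (hδ2.trans hαb) hbκ hδ3 hbl
      have hcohδ : C δ j = C b j ∩ Set.Iio δ := hspec.2.2.2 j hδ4 hjθ
      have hclub : IsClubIn (C δ j) δ :=
        (hsq.1 δ (hδκ δ hδ2) hδ3).2.2.1 j (hspec.1.trans hδ4) hjθ
      have hηδ : η < δ := lt_of_lt_of_le (Order.lt_succ η) hδ1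
      obtain ⟨ξ, hξ1, hξ2⟩ := hclub.2.2 η hηδ
      have hξδ : ξ < δ := hclub.1 hξ1
      have : ξ ∈ C b j := by
        rw [hcohδ] at hξ1; exact hξ1.1
      exact ⟨ξ, this, hξδ.trans hδ2, hξ2⟩
    have h2 := hsq.2.1 b hbκ hbl j hiFb hjθ α hacc hcof
    refine eIdx_le ⟨h2.1, hiFb, hjθ, fun i hji hiθ => ?_⟩
    have hmono : C b j ⊆ C b i := (hsq.1 b hbκ hbl).2.1 j i hiFb hji hiθ
    have hacci : α ∈ ordAcc (C b i) := mem_ordAcc_mono hmono hαl hacc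
    exact (hsq.2.1 b hbκ hbl i (hiFb.trans hji) hiθ α hacci hcof).2

lemma col_U (hsq : IndSqE κ θ C iF) (hθ : θ.IsRegular) (hθκ : θ < κ)
    {H : Set Ordinal.{0}} (hHsub : H ⊆ Set.Iio κ.ord) (hHcard : #H = Cardinal.lift.{1} κ)
    {j : Ordinal.{0}} (hj : j < θ.ord) :
    ∃ α ∈ H, ∃ β ∈ H, α < β ∧ j ≤ col θ C iF α β := by
  have hκa : ℵ₀ < κ := hθ.aleph0_le.trans_lt hθκ
  by_contra hcon
  push_neg at hcon
  have hHub : ∀ γ < κ.ord, ∃ x ∈ H, γ < x :=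
    unbounded_of_lift_le hκa.le hHsub hHcard.ge
  set H' : Set Ordinal.{0} := uLim '' H with hH'def
  have hH'ub : ∀ γ < κ.ord, ∃ y ∈ H', γ < y := by
    intro γ hγ
    obtain ⟨x, hx, hγx⟩ := hHub γ hγ
    exact ⟨uLim x, mem_image_of_mem _ hx, hγx.trans_le (le_uLim x)⟩
  have hH'sub : ∀ y ∈ H', y < κ.ord ∧ Order.IsSuccLimit y := by
    rintro y ⟨x, hx, rfl⟩
    exact ⟨uLim_lt_ord hκa (hHsub hx), uLim_isLimit x⟩
  have hkey : ∀ x ∈ H', ∀ y ∈ H', x < y → eIdx θ C iF x y < j := by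
    rintro x ⟨a, ha, rfl⟩ y ⟨b, hb, rfl⟩ hxy
    have hab : a < b := by
      by_contra hc
      exact absurd (uLim_mono (le_of_not_gt hc)) (not_le_of_gt hxy)
    have := hcon a ha b hb hab
    rwa [col, if_neg hxy.ne] at this
  have hiFj : ∀ y ∈ H', iF y ≤ j := by
    intro y hy
    obtain ⟨z, hz, hyz⟩ := hH'ub y (hH'sub y hy).1
    exact le_trans (eIdx_spec hsq hyz (hH'sub z hz).1 (hH'sub y hy).2 (hH'sub z hz).2).1
      (hkey y hy z hz hyz).le
  have hcoh : ∀ x ∈ H', ∀ y ∈ H', x < y → C x j = C y j ∩ Set.Iio x := by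
    intro x hx y hy hxy
    exact (eIdx_spec hsq hxy (hH'sub y hy).1 (hH'sub x hx).2 (hH'sub y hy).2).2.2.2 j
      (hkey x hx y hy hxy).le hj
  have hcluby : ∀ y ∈ H', IsClubIn (C y j) y := fun y hy =>
    (hsq.1 y (hH'sub y hy).1 (hH'sub y hy).2).2.2.1 j (hiFj y hy) hj
  set D : Set Ordinal.{0} := {ξ | ∃ y ∈ H', ξ ∈ C y j} with hDdef
  have hDy : ∀ y ∈ H', D ∩ Set.Iio y = C y j := by
    intro y hy
    ext ξ
    constructor
    · rintro ⟨⟨z, hz, hξz⟩, hξy⟩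
      rcases lt_trichotomy z y with hzy | rfl | hzy
      · have := hcoh z hz y hy hzy
        rw [this] at hξz
        exact hξz.1
      · exact hξz
      · rw [hcoh y hy z hz hzy]
        exact ⟨hξz, hξy⟩
    · intro hξ
      exact ⟨⟨y, hy, hξ⟩, (hcluby y hy).1 hξ⟩
  have hDcap : ∀ γ, ∀ y ∈ H', γ < y → D ∩ Set.Iio γ = C y j ∩ Set.Iio γ := by
    intro γ y hy hγy
    rw [← hDy y hy]
    ext ξ
    constructor
    · rintro ⟨h1, h2⟩
      exact ⟨⟨h1, h2.trans hγy⟩, h2⟩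
    · rintro ⟨⟨h1, _⟩, h3⟩
      exact ⟨h1, h3⟩
  have hDsub : D ⊆ Set.Iio κ.ord := by
    rintro ξ ⟨y, hy, hξ⟩
    exact lt_trans ((hcluby y hy).1 hξ) (hH'sub y hy).1
  have hDacc : ∀ γ, ∀ y ∈ H', γ < y → γ ∈ ordAcc D → γ ∈ ordAcc (C y j) := by
    rintro γ y hy hγy ⟨h1, h2⟩
    refine ⟨h1, ?_⟩
    rw [← hDcap γ y hy hγy]
    exact h2
  have hDclub : IsClubIn D κ.ord := by
    refine ⟨hDsub, ?_, ?_⟩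
    · intro γ hγ hγacc
      obtain ⟨y, hy, hγy⟩ := hH'ub γ hγ
      exact ⟨y, hy, (hcluby y hy).2.1 γ hγy (hDacc γ y hy hγy hγacc)⟩
    · intro γ hγ
      obtain ⟨y, hy, hγy⟩ := hH'ub γ hγ
      obtain ⟨ξ, hξ, hγξ⟩ := (hcluby y hy).2.2 γ hγy
      exact ⟨ξ, ⟨y, hy, hξ⟩, hγξ⟩
  obtain ⟨a, haκ, haacc, hacof, hane⟩ := hsq.2.2.2 D hDclub
  obtain ⟨y, hy, hay⟩ := hH'ub a haκ
  have h2 := hsq.2.1 y (hH'sub y hy).1 (hH'sub y hy).2 j (hiFj y hy) hj a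
    (hDacc a y hy hay haacc) hacof
  refine hane j hj ?_
  rw [h2.2]
  exact hDcap a y hy hay
end Main

lemma evConst {κ : Cardinal.{0}} (hκ : κ.IsRegular) {L : Type 1} [LinearOrder L]
    (v : Ordinal.{0} → L) {S : Set Ordinal.{0}} (hSsub : S ⊆ Set.Iio κ.ord)
    (hScard : Cardinal.lift.{1} κ ≤ #S)
    (hmono : ∀ x ∈ S, ∀ y ∈ S, x ≤ y → v x ≤ v y)
    (hsmall : #(v '' S) < Cardinal.lift.{1} κ) :
    ∃ x₀ ∈ S, ∀ y ∈ S, x₀ ≤ y → v y = v x₀ := by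
  have hcof : ((Cardinal.lift.{1} κ).ord).cof = Cardinal.lift.{1} κ := by
    rw [← Cardinal.lift_ord, ← Ordinal.lift_cof, hκ.cof_eq]
  have hal : ℵ₀ ≤ Cardinal.lift.{1} κ := Cardinal.aleph0_le_lift.mpr hκ.aleph0_le
  obtain ⟨a, t, hts, htcard, htf⟩ := Cardinal.infinite_pigeonhole_set
    (f := fun x : ↥S => (⟨v x.1, Set.mem_image_of_mem v x.2⟩ : ↥(v '' S)))
    (Cardinal.lift.{1} κ) hScard hal (by rw [hcof]; exact hsmall)
  have htub : ∀ γ < κ.ord, ∃ x ∈ t, γ < x :=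
    unbounded_of_lift_le hκ.aleph0_le (fun x hx => hSsub (hts hx)) htcard
  obtain ⟨x₀, hx₀t, -⟩ := htub 0 hκ.ord_pos
  refine ⟨x₀, hts hx₀t, fun y hy hx₀y => ?_⟩
  obtain ⟨z, hzt, hyz⟩ := htub y (hSsub hy)
  have h1 : v x₀ ≤ v y := hmono x₀ (hts hx₀t) y hy hx₀y
  have h2 : v y ≤ v z := hmono y hy z (hts hzt) hyz.le
  have h3 : v z = v x₀ := by
    have e1 := htf hx₀t
    have e2 := htf hzt
    have := congrArg Subtype.val (e2.trans e1.symm)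
    simpa using this
  exact le_antisymm (h3 ▸ h2) h1

lemma smallVImage {κ θ : Cardinal.{0}} (hκ : κ.IsRegular) (hθ : ℵ₀ ≤ θ) (hθκ : θ < κ)
    (hsl : κ.IsStrongLimit)
    (c : Ordinal.{0} → Ordinal.{0} → Ordinal.{0})
    (hbound : ∀ α β, α < β → β < κ.ord → c α β < θ.ord)
    {α : Ordinal.{0}} (hα : α < κ.ord) {S : Set Ordinal.{0}} (hSsub : S ⊆ Set.Iio κ.ord)
    (hSgt : ∀ x ∈ S, α < x) {L : Type 1} (v : Ordinal.{0} → L)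
    (hv : ∀ x ∈ S, ∀ y ∈ S,
      (fun ε => if ε ≤ α then c ε x else 0) = (fun ε => if ε ≤ α then c ε y else 0) → v x = v y) :
    #(v '' S) < Cardinal.lift.{1} κ := by
  classical
  set w : Ordinal.{0} → Ordinal.{0} → Ordinal.{0} := fun x ε => if ε ≤ α then c ε x else 0
    with hwdef
  have h1 : #(v '' S) ≤ #(w '' S) := by
    have hne : ∀ p : ↥(v '' S), ∃ x, x ∈ S ∧ v x = p.1 := by
      rintro ⟨p, x, hx, rfl⟩; exact ⟨x, hx, rfl⟩
    choose rep hrepS hrepv using hne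
    refine Cardinal.mk_le_of_injective
      (f := fun p => (⟨w (rep p), Set.mem_image_of_mem w (hrepS p)⟩ : ↥(w '' S))) ?_
    intro p q hpq
    have hw : w (rep p) = w (rep q) := congrArg Subtype.val hpq
    have := hv _ (hrepS p) _ (hrepS q) hw
    exact Subtype.ext ((hrepv p).symm.trans (this.trans (hrepv q)))
  have hlt : ∀ ε' : Ordinal.{0}, ε' < α + 1 → ε' ≤ α := by
    intro ε' h
    rw [Ordinal.add_one_eq_succ] at h
    exact Order.lt_succ_iff.mp h
  have h2 : #(↥(w '' S)) ≤ #(↥(Set.Iio (α+1)) → ↥(Set.Iio θ.ord)) := by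
    have hne : ∀ p : ↥(w '' S), ∃ x, x ∈ S ∧ w x = p.1 := by
      rintro ⟨p, x, hx, rfl⟩; exact ⟨x, hx, rfl⟩
    choose rep hrepS hrepw using hne
    have hval : ∀ (p : ↥(w '' S)) (ε : ↥(Set.Iio (α+1))), p.1 ε.1 < θ.ord := by
      intro p ε
      rw [← hrepw p]
      show (if ε.1 ≤ α then c ε.1 (rep p) else 0) < θ.ord
      rw [if_pos (hlt ε.1 ε.2)]
      exact hbound ε.1 (rep p) (lt_of_le_of_lt (hlt ε.1 ε.2) (hSgt _ (hrepS p))) (hSsub (hrepS p))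
    refine Cardinal.mk_le_of_injective
      (f := fun p ε => (⟨p.1 ε.1, hval p ε⟩ : ↥(Set.Iio θ.ord))) ?_
    intro p q hpq
    apply Subtype.ext
    rw [← hrepw p, ← hrepw q]
    funext ε
    by_cases hεα : ε ≤ α
    · have hεmem : ε ∈ Set.Iio (α+1) := by
        rw [Set.mem_Iio, Ordinal.add_one_eq_succ, Order.lt_succ_iff]; exact hεα
      have hthis := congrArg Subtype.val (congrFun hpq ⟨ε, hεmem⟩)
      simp only at hthis
      exact (congrFun (hrepw p) ε).trans (hthis.trans (congrFun (hrepw q) ε).symm)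
    · show (if ε ≤ α then c ε (rep p) else 0) = (if ε ≤ α then c ε (rep q) else 0)
      rw [if_neg hεα, if_neg hεα]
  have h3 : #(↥(Set.Iio (α+1)) → ↥(Set.Iio θ.ord)) =
      Cardinal.lift.{1} (θ ^ (α+1).card) := by
    rw [← Cardinal.power_def, Ordinal.mk_Iio_ordinal, Ordinal.mk_Iio_ordinal,
      Cardinal.card_ord, Cardinal.lift_power]
  have h4 : θ ^ (α+1).card < κ := by
    have hμ : (α+1).card < κ := by
      rw [← Cardinal.lt_ord]
      rw [Ordinal.add_one_eq_succ]
      exact (Cardinal.isSuccLimit_ord hκ.aleph0_le).succ_lt hα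
    calc θ ^ (α+1).card ≤ (2 ^ θ) ^ (α+1).card :=
          Cardinal.power_le_power_right (Cardinal.cantor θ).le
      _ = 2 ^ (θ * (α+1).card) := by rw [← Cardinal.power_mul]
      _ < κ := hsl.two_power_lt (Cardinal.mul_lt_of_lt hκ.aleph0_le hθκ hμ)
  exact lt_of_le_of_lt (h1.trans (h2.trans h3.le)) (Cardinal.lift_lt.mpr h4)

lemma buildSeq {κ : Cardinal.{0}} (hκ : κ.IsRegular) {H : Set Ordinal.{0}}
    (hHsub : H ⊆ Set.Iio κ.ord) (hub : ∀ γ < κ.ord, ∃ x ∈ H, γ < x)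
    (t : Ordinal.{0} → Ordinal.{0}) (ht : ∀ x ∈ H, t x < κ.ord) :
    ∃ F : Ordinal.{0} → Ordinal.{0}, (∀ δ, δ < κ.ord → F δ ∈ H) ∧
      (∀ η δ, η < δ → δ < κ.ord → F η < F δ ∧ t (F η) ≤ F δ) := by
  classical
  let G : (δ : Ordinal.{0}) → ((η : Ordinal.{0}) → η < δ → Ordinal.{0}) → Ordinal.{0} :=
    fun δ rec => sInf {x | x ∈ H ∧ ∀ η, ∀ h : η < δ, rec η h < x ∧ t (rec η h) ≤ x}
  let F := WellFounded.fix Ordinal.lt_wf G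
  have hFeq : ∀ δ, F δ = sInf {x | x ∈ H ∧ ∀ η, ∀ _ : η < δ, F η < x ∧ t (F η) ≤ x} :=
    fun δ => WellFounded.fix_eq Ordinal.lt_wf G δ
  have key : ∀ δ, δ < κ.ord → F δ ∈ H ∧ ∀ η, ∀ _ : η < δ, F η < F δ ∧ t (F η) ≤ F δ := by
    intro δ
    induction δ using Ordinal.induction with
    | _ δ IH =>
      intro hδ
      have hBlt : Ordinal.bsup.{0,0} δ (fun η _ => max (F η + 1) (t (F η))) < κ.ord := by
        apply Ordinal.bsup_lt_ord
        · rw [hκ.cof_eq]; exact Cardinal.lt_ord.mp hδ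
        · intro η hη
          have h1 := IH η hη (hη.trans hδ)
          have hFη : F η < κ.ord := hHsub h1.1
          apply max_lt
          · rw [Ordinal.add_one_eq_succ]
            exact (Cardinal.isSuccLimit_ord hκ.aleph0_le).succ_lt hFη
          · exact ht _ h1.1
      obtain ⟨x, hxH, hxgt⟩ := hub _ hBlt
      have hmem : x ∈ {x | x ∈ H ∧ ∀ η, ∀ _ : η < δ, F η < x ∧ t (F η) ≤ x} := by
        refine ⟨hxH, fun η hη => ?_⟩
        have hle := Ordinal.le_bsup (fun η _ => max (F η + 1) (t (F η))) η hη
        constructor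
        · have h2 : F η + 1 ≤ x := ((le_max_left _ _).trans hle).trans hxgt.le
          rw [Ordinal.add_one_eq_succ] at h2
          exact lt_of_lt_of_le (Order.lt_succ _) h2
        · exact ((le_max_right _ _).trans hle).trans hxgt.le
      have hF : F δ ∈ {x | x ∈ H ∧ ∀ η, ∀ _ : η < δ, F η < x ∧ t (F η) ≤ x} := by
        rw [hFeq δ]
        exact csInf_mem ⟨x, hmem⟩
      exact ⟨hF.1, hF.2⟩
  exact ⟨F, fun δ hδ => (key δ hδ).1, fun η δ hηδ hδ => (key δ hδ).2 η hηδ⟩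

lemma noWC (κ θ : Cardinal.{0}) (hθ : θ.IsRegular) (hκ : κ.IsRegular) (hθκ : θ < κ)
    (c : Ordinal.{0} → Ordinal.{0} → Ordinal.{0})
    (hbound : ∀ α β, α < β → β < κ.ord → c α β < θ.ord)
    (hU : ∀ H : Set Ordinal.{0}, H ⊆ Set.Iio κ.ord → #H = Cardinal.lift.{1} κ →
      ∀ j, j < θ.ord → ∃ α ∈ H, ∃ β ∈ H, α < β ∧ j ≤ c α β)
    (hin : κ.IsInaccessible)
    (hwc : ∀ d : Ordinal.{0} → Ordinal.{0} → Bool,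
      ∃ H : Set Ordinal.{0}, H ⊆ Set.Iio κ.ord ∧ #H = Cardinal.lift.{1} κ ∧
        ∃ b : Bool, ∀ α ∈ H, ∀ β ∈ H, α < β → d α β = b) : False := by
  classical
  have hsl := hin.isStrongLimit
  obtain ⟨hκa, -, -⟩ := hin
  let w : Ordinal.{0} → Ordinal.{0} → Ordinal.{0} → Ordinal.{0} :=
    fun α x ε => if ε ≤ α then c ε x else 0
  let LexLE : Ordinal.{0} → Ordinal.{0} → Prop := fun x y =>
    (∀ ε < x, c ε x = c ε y) ∨ ∃ δ, δ < x ∧ (∀ ε < δ, c ε x = c ε y) ∧ c δ x < c δ y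
  obtain ⟨H, hHsub, hHcard, b, hhom⟩ := hwc (fun x y => decide (LexLE x y))
  have hHub : ∀ γ < κ.ord, ∃ x ∈ H, γ < x :=
    unbounded_of_lift_le hκ.aleph0_le hHsub hHcard.ge
  -- trichotomy from homogeneity
  have htri : ∀ α, ∀ x ∈ H, ∀ y ∈ H, α < x → x < y →
      w α x = w α y ∨ (b = true ∧ toLex (w α x) < toLex (w α y)) ∨
        (b = false ∧ toLex (w α y) < toLex (w α x)) := by
    intro α x hx y hy hαx hxy
    have hd := hhom x hx y hy hxy
    cases hb : b with
    | true =>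
      rw [hb] at hd
      have hL : LexLE x y := of_decide_eq_true hd
      rcases hL with hL | ⟨δ, hδx, hmins, hlt⟩
      · left
        funext ε
        show (if ε ≤ α then c ε x else 0) = (if ε ≤ α then c ε y else 0)
        by_cases hεα : ε ≤ α
        · rw [if_pos hεα, if_pos hεα]; exact hL ε (lt_of_le_of_lt hεα hαx)
        · rw [if_neg hεα, if_neg hεα]
      · by_cases hδα : δ ≤ α
        · refine Or.inr (Or.inl ⟨rfl, ⟨δ, fun j hj => ?_, ?_⟩⟩)
          · show (if j ≤ α then c j x else 0) = (if j ≤ α then c j y else 0)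
            rw [if_pos (hj.le.trans hδα), if_pos (hj.le.trans hδα)]
            exact hmins j hj
          · show (if δ ≤ α then c δ x else 0) < (if δ ≤ α then c δ y else 0)
            rw [if_pos hδα, if_pos hδα]
            exact hlt
        · left
          funext ε
          show (if ε ≤ α then c ε x else 0) = (if ε ≤ α then c ε y else 0)
          by_cases hεα : ε ≤ α
          · rw [if_pos hεα, if_pos hεα]
            exact hmins ε (lt_of_le_of_lt hεα (lt_of_not_ge hδα))
          · rw [if_neg hεα, if_neg hεα]
    | false =>
      rw [hb] at hd
      have hnL : ¬ LexLE x y := of_decide_eq_false hd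
      rw [not_or] at hnL
      obtain ⟨h1, h2⟩ := hnL
      push_neg at h1
      push_neg at h2
      obtain ⟨ε0, hε0x, hε0ne⟩ := h1
      set T : Set Ordinal.{0} := {ε | c ε x ≠ c ε y} with hTdef
      have hTne : T.Nonempty := ⟨ε0, hε0ne⟩
      set δ := sInf T with hδdef
      have hδT : δ ∈ T := csInf_mem hTne
      have hδx : δ < x := lt_of_le_of_lt (csInf_le (OrderBot.bddBelow T) (show ε0 ∈ T from hε0ne)) hε0x
      have hmins : ∀ j < δ, c j x = c j y := by
        intro j hj
        by_contra hne
        exact absurd (csInf_le (OrderBot.bddBelow T) (show j ∈ T from hne)) (not_le_of_gt hj)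
      have hlt : c δ y < c δ x :=
        lt_of_le_of_ne (h2 δ hδx hmins) (fun h => hδT (h.symm))
      by_cases hδα : δ ≤ α
      · refine Or.inr (Or.inr ⟨rfl, ⟨δ, fun j hj => ?_, ?_⟩⟩)
        · show (if j ≤ α then c j y else 0) = (if j ≤ α then c j x else 0)
          rw [if_pos (hj.le.trans hδα), if_pos (hj.le.trans hδα)]
          exact (hmins j hj).symm
        · show (if δ ≤ α then c δ y else 0) < (if δ ≤ α then c δ x else 0)
          rw [if_pos hδα, if_pos hδα]
          exact hlt
      · left
        funext ε
        show (if ε ≤ α then c ε x else 0) = (if ε ≤ α then c ε y else 0)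
        by_cases hεα : ε ≤ α
        · rw [if_pos hεα, if_pos hεα]
          exact hmins ε (lt_of_le_of_lt hεα (lt_of_not_ge hδα))
        · rw [if_neg hεα, if_neg hεα]
  -- eventual constancy for each α
  have hECraw : ∀ α, α < κ.ord → ∃ x₀, (x₀ ∈ H ∧ α < x₀) ∧
      ∀ y ∈ H, α < y → x₀ ≤ y → w α y = w α x₀ := by
    intro α hα
    set S : Set Ordinal.{0} := {x | x ∈ H ∧ α < x} with hSdef
    have hSsub : S ⊆ Set.Iio κ.ord := fun x hx => hHsub hx.1
    have hSgt : ∀ x ∈ S, α < x := fun x hx => hx.2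
    have hScard : Cardinal.lift.{1} κ ≤ #S := by
      by_contra hltS
      push_neg at hltS
      have hsplit : H ⊆ S ∪ Set.Iio (α+1) := by
        intro x hx
        by_cases h : α < x
        · exact Or.inl ⟨hx, h⟩
        · right
          rw [Set.mem_Iio, Ordinal.add_one_eq_succ, Order.lt_succ_iff]
          exact le_of_not_gt h
      have h1 : #H ≤ #S + #(Set.Iio (α+1) : Set Ordinal.{0}) :=
        le_trans (Cardinal.mk_le_mk_of_subset hsplit) (Cardinal.mk_union_le _ _)
      have h2 : #(Set.Iio (α+1) : Set Ordinal.{0}) < Cardinal.lift.{1} κ := by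
        rw [Ordinal.mk_Iio_ordinal]
        refine Cardinal.lift_lt.mpr (Cardinal.lt_ord.mp ?_)
        rw [Ordinal.add_one_eq_succ]
        exact (Cardinal.isSuccLimit_ord hκ.aleph0_le).succ_lt hα
      have hal : ℵ₀ ≤ Cardinal.lift.{1} κ := Cardinal.aleph0_le_lift.mpr hκ.aleph0_le
      have := h1.trans_lt (Cardinal.add_lt_of_lt hal hltS h2)
      rw [hHcard] at this
      exact absurd this (lt_irrefl _)
    cases hb : b with
    | true =>
      have hmono : ∀ x ∈ S, ∀ y ∈ S, x ≤ y → toLex (w α x) ≤ toLex (w α y) := by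
        intro x hx y hy hxy
        rcases hxy.lt_or_eq with h | rfl
        · rcases htri α x hx.1 y hy.1 hx.2 h with he | ⟨_, hlt⟩ | ⟨hbf, _⟩
          · exact le_of_eq (congrArg toLex he)
          · exact hlt.le
          · rw [hb] at hbf; cases hbf
        · exact le_rfl
      have hsmall := smallVImage hκ hθ.aleph0_le hθκ hsl c hbound hα hSsub hSgt
        (fun x => toLex (w α x)) (fun x _ y _ he => congrArg toLex he)
      obtain ⟨x₀, hx₀S, hconst⟩ :=
        evConst hκ (fun x => toLex (w α x)) hSsub hScard hmono hsmall
      exact ⟨x₀, ⟨hx₀S.1, hx₀S.2⟩, fun y hy hαy hx₀y =>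
        toLex.injective (hconst y ⟨hy, hαy⟩ hx₀y)⟩
    | false =>
      have hmono : ∀ x ∈ S, ∀ y ∈ S, x ≤ y →
          OrderDual.toDual (toLex (w α x)) ≤ OrderDual.toDual (toLex (w α y)) := by
        intro x hx y hy hxy
        rcases hxy.lt_or_eq with h | rfl
        · rcases htri α x hx.1 y hy.1 hx.2 h with he | ⟨hbt, _⟩ | ⟨_, hlt⟩
          · exact le_of_eq (congrArg _ he)
          · rw [hb] at hbt; cases hbt
          · exact OrderDual.toDual_le_toDual.mpr hlt.le
        · exact le_rfl
      have hsmall := smallVImage hκ hθ.aleph0_le hθκ hsl c hbound hα hSsub hSgt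
        (fun x => OrderDual.toDual (toLex (w α x)))
        (fun x _ y _ he => congrArg (fun z => OrderDual.toDual (toLex z)) he)
      obtain ⟨x₀, hx₀S, hconst⟩ :=
        evConst hκ (fun x => OrderDual.toDual (toLex (w α x))) hSsub hScard hmono hsmall
      exact ⟨x₀, ⟨hx₀S.1, hx₀S.2⟩, fun y hy hαy hx₀y =>
        toLex.injective (OrderDual.toDual.injective (hconst y ⟨hy, hαy⟩ hx₀y))⟩
  have hEC2 : ∀ α, ∃ x₀, α < κ.ord → ((x₀ ∈ H ∧ α < x₀) ∧
      ∀ y ∈ H, α < y → x₀ ≤ y → w α y = w α x₀) := by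
    intro α
    by_cases h : α < κ.ord
    · obtain ⟨x₀, h1, h2⟩ := hECraw α h
      exact ⟨x₀, fun _ => ⟨h1, h2⟩⟩
    · exact ⟨0, fun hc => absurd hc h⟩
  choose t ht using hEC2
  have htH : ∀ x ∈ H, t x < κ.ord := fun x hx => hHsub (ht x (hHsub hx)).1.1
  obtain ⟨F, hFH, hFprop⟩ := buildSeq hκ hHsub hHub t htH
  set Hstar : Set Ordinal.{0} := F '' Set.Iio κ.ord with hHstardef
  have hstarsub : Hstar ⊆ Set.Iio κ.ord := by
    rintro p ⟨δ, hδ, rfl⟩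
    exact hHsub (hFH δ hδ)
  have hstarH : Hstar ⊆ H := by
    rintro p ⟨δ, hδ, rfl⟩
    exact hFH δ hδ
  have hstarcard : #Hstar = Cardinal.lift.{1} κ := by
    have hinj : Set.InjOn F (Set.Iio κ.ord) := by
      intro η hη δ hδ he
      by_contra hne
      rcases lt_or_gt_of_ne hne with h | h
      · exact absurd he (hFprop η δ h hδ).1.ne
      · exact absurd he.symm (hFprop δ η h hη).1.ne
    rw [Cardinal.mk_image_eq_of_injOn F _ hinj, Ordinal.mk_Iio_ordinal, Cardinal.card_ord]
  have hpair : ∀ p ∈ Hstar, ∀ q ∈ Hstar, p < q → c p q = c p (t p) := by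
    rintro p ⟨η, hη, rfl⟩ q ⟨δ, hδ, rfl⟩ hpq
    have hηδ : η < δ := by
      by_contra hc
      rcases (le_of_not_gt hc).lt_or_eq with h | h
      · exact absurd (hFprop δ η h hη).1 (not_lt_of_gt hpq)
      · rw [h] at hpq; exact absurd hpq (lt_irrefl _)
    have hprop := hFprop η δ hηδ hδ
    have hEq := (ht (F η) (hHsub (hFH η hη))).2 (F δ) (hFH δ hδ) hprop.1 hprop.2
    have := congrFun hEq (F η)
    show c (F η) (F δ) = c (F η) (t (F η))
    simpa [w] using this
  set g : Ordinal.{0} → Ordinal.{0} := fun p => c p (t p) with hgdef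
  have hgθ : ∀ p ∈ Hstar, g p < θ.ord := by
    intro p hp
    have h1 := (ht p (hstarsub hp)).1
    exact hbound p (t p) h1.2 (hHsub h1.1)
  have hcof : ((Cardinal.lift.{1} κ).ord).cof = Cardinal.lift.{1} κ := by
    rw [← Cardinal.lift_ord, ← Ordinal.lift_cof, hκ.cof_eq]
  have hal : ℵ₀ ≤ Cardinal.lift.{1} κ := Cardinal.aleph0_le_lift.mpr hκ.aleph0_le
  obtain ⟨a, A, hAsub, hAcard, hAf⟩ := Cardinal.infinite_pigeonhole_set
    (s := Hstar) (f := fun p => (⟨g p.1, hgθ p.1 p.2⟩ : ↥(Set.Iio θ.ord)))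
    (Cardinal.lift.{1} κ) hstarcard.ge hal
    (by rw [hcof, Ordinal.mk_Iio_ordinal, Cardinal.card_ord]; exact Cardinal.lift_lt.mpr hθκ)
  have hAsubκ : A ⊆ Set.Iio κ.ord := fun x hx => hstarsub (hAsub hx)
  have hAcard' : #A = Cardinal.lift.{1} κ := by
    refine le_antisymm ?_ hAcard
    have := Cardinal.mk_le_mk_of_subset hAsubκ
    rwa [Ordinal.mk_Iio_ordinal, Cardinal.card_ord] at this
  have hjθ : a.1 + 1 < θ.ord := by
    rw [Ordinal.add_one_eq_succ]
    exact (Cardinal.isSuccLimit_ord hθ.aleph0_le).succ_lt a.2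
  obtain ⟨α, hαA, β, hβA, hαβ, hjle⟩ := hU A hAsubκ hAcard' (a.1 + 1) hjθ
  have hgα : g α = a.1 := congrArg Subtype.val (hAf hαA)
  have hcαβ : c α β = a.1 := by
    rw [hpair α (hAsub hαA) β (hAsub hβA) hαβ]
    exact hgα
  rw [hcαβ, Ordinal.add_one_eq_succ] at hjle
  exact absurd (Order.succ_le_iff.mp hjle) (lt_irrefl _)


/-- If `θ < κ` are infinite regular cardinals and `⊟ⁱⁿᵈ(κ,θ)` holds, then there is a
coloring `c : [κ]² → θ` witnessing `U(κ,2,θ,2)` that is subadditive and closed on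
points of cofinality `≥ θ`; in particular `κ` is not weakly compact. -/
theorem stmt7 (κ θ : Cardinal.{0}) (hθ : θ.IsRegular) (hκ : κ.IsRegular) (hθκ : θ < κ)
    (C : Ordinal.{0} → Ordinal.{0} → Set Ordinal.{0}) (iF : Ordinal.{0} → Ordinal.{0})
    (hsq : IndSqE κ θ C iF) :
    (∃ c : Ordinal.{0} → Ordinal.{0} → Ordinal.{0},
      (∀ α β, α < β → β < κ.ord → c α β < θ.ord) ∧
      -- c witnesses U(κ,2,θ,2)
      (∀ H : Set Ordinal.{0}, H ⊆ Set.Iio κ.ord → #H = Cardinal.lift.{1} κ →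
        ∀ j, j < θ.ord → ∃ α ∈ H, ∃ β ∈ H, α < β ∧ j ≤ c α β) ∧
      -- c is subadditive
      (∀ α β γ, α < β → β < γ → γ < κ.ord →
        c α γ ≤ max (c α β) (c β γ) ∧ c α β ≤ max (c α γ) (c β γ)) ∧
      -- c is closed on points of cofinality ≥ θ
      (∀ α β j, α < β → β < κ.ord → θ ≤ α.cof →
        (∀ η < α, ∃ ε, η ≤ ε ∧ ε < α ∧ c ε β ≤ j) → c α β ≤ j)) ∧
    -- in particular, κ is not weakly compact
    ¬ (κ.IsInaccessible ∧ ∀ d : Ordinal.{0} → Ordinal.{0} → Bool,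
        ∃ H : Set Ordinal.{0}, H ⊆ Set.Iio κ.ord ∧ #H = Cardinal.lift.{1} κ ∧
          ∃ b : Bool, ∀ α ∈ H, ∀ β ∈ H, α < β → d α β = b) := by
  have hκa : ℵ₀ < κ := hθ.aleph0_le.trans_lt hθκ
  have hex : (∃ c : Ordinal.{0} → Ordinal.{0} → Ordinal.{0},
      (∀ α β, α < β → β < κ.ord → c α β < θ.ord) ∧
      (∀ H : Set Ordinal.{0}, H ⊆ Set.Iio κ.ord → #H = Cardinal.lift.{1} κ →
        ∀ j, j < θ.ord → ∃ α ∈ H, ∃ β ∈ H, α < β ∧ j ≤ c α β) ∧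
      (∀ α β γ, α < β → β < γ → γ < κ.ord →
        c α γ ≤ max (c α β) (c β γ) ∧ c α β ≤ max (c α γ) (c β γ)) ∧
      (∀ α β j, α < β → β < κ.ord → θ ≤ α.cof →
        (∀ η < α, ∃ ε, η ≤ ε ∧ ε < α ∧ c ε β ≤ j) → c α β ≤ j)) := by
    refine ⟨col θ C iF, ?_, ?_, ?_, ?_⟩
    · intro α β h1 h2
      exact col_lt hsq hθ hκa h1 h2
    · intro H h1 h2 j hj
      exact col_U hsq hθ hθκ h1 h2 hj
    · intro α β γ h1 h2 h3
      exact ⟨col_sub1 hsq hκa h1 h2 h3, col_sub2 hsq hκa h1 h2 h3⟩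
    · intro α β j h1 h2 h3 h4
      exact col_closed hsq hθ hκa h1 h2 h3 h4
  refine ⟨hex, ?_⟩
  rintro ⟨hin, hwc⟩
  obtain ⟨c, hbound, hUU, hsub, hclosed⟩ := hex
  exact noWC κ θ hθ hκ hθκ c hbound hUU hin hwc
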